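/- Irreducibility of the ergodic component: Let N ≥ 1 and let k be an integer with N/2 < k ≤ N. Define the jump relation → on {0,1}^{𝕋_N} by: η → η′ if and only if there exists x ∈ 𝕋_N with c_{x,x+1}(η) ≥ 1 and η′ = η^{x,x+1}. Then (i) Ω_N^k is closed under →, i.e. if η ∈ Ω_N^k and η → η′ then η′ ∈ Ω_N^k; and (ii) for any two configurations η, η′ ∈ Ω_N^k, η′ can be reached from η by the reflexive–transitive closure of →. -/

import Mathlib

open scoped BigOperators
open scoped Classical

namespace FEP

/-- A configuration of the facilitated exclusion process on the discrete torus `𝕋_N`. -/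
abbrev Config (N : ℕ) := ZMod N → Bool

/-- Real-valued occupation number. -/
noncomputable def ind (b : Bool) : ℝ := if b then 1 else 0

/-- The configuration obtained by exchanging the states of sites `x` and `y`. -/
def swapConf {N : ℕ} (x y : ZMod N) (η : Config N) : Config N :=
  fun z => η (Equiv.swap x y z)

/-- Facilitated exclusion jump rate `c_{x,x+1}(η)`. -/
noncomputable def rate {N : ℕ} (η : Config N) (x : ZMod N) : ℝ :=
  ind (η (x - 1)) * ind (η x) * (1 - ind (η (x + 1))) +
    ind (η (x + 2)) * ind (η (x + 1)) * (1 - ind (η x))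

/-- The generator `𝓛_N` of the facilitated exclusion process, as a matrix. -/
noncomputable def gen (N : ℕ) [NeZero N] : Matrix (Config N) (Config N) ℝ :=
  fun η η' => ∑ x : ZMod N, rate η x *
    ((if η' = swapConf x (x + 1) η then (1 : ℝ) else 0) - (if η' = η then 1 else 0))

/-- The generator as a continuous linear endomorphism of functions on configurations. -/
noncomputable def genE (N : ℕ) [NeZero N] : (Config N → ℝ) →L[ℝ] (Config N → ℝ) :=
  LinearMap.toContinuousLinearMap (Matrix.toLin' (gen N))

/-- `lawApply N μ t g` is the expectation of `g` at macroscopic time `t` under the diffusively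
rescaled dynamics started from the measure `μ`, i.e. `μ(e^{t N² 𝓛_N} g)`. -/
noncomputable def lawApply (N : ℕ) [NeZero N] (μ : Config N → ℝ) (t : ℝ)
    (g : Config N → ℝ) : ℝ :=
  ∑ η : Config N, μ η * (NormedSpace.exp ((t * (N : ℝ) ^ 2) • genE N)) g η

/-- The law at macroscopic time `t` of the diffusively rescaled process started from `μ`. -/
noncomputable def evolveMeasure (N : ℕ) [NeZero N] (μ : Config N → ℝ) (t : ℝ) :
    Config N → ℝ :=
  fun η' => lawApply N μ t (fun ζ => if ζ = η' then 1 else 0)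

/-- Number of particles of a configuration. -/
def numParticles {N : ℕ} [NeZero N] (η : Config N) : ℕ :=
  ∑ x : ZMod N, (if η x then 1 else 0)

/-- The ergodic set `𝓔_N`. -/
def ergodicSet (N : ℕ) [NeZero N] : Set (Config N) :=
  {η | (∀ x : ZMod N, η x = true ∨ η (x + 1) = true) ∧ N < 2 * numParticles η}

/-- The product measure `μ_N` fitting the initial profile `ρ₀`. -/
noncomputable def muN (ρ₀ : ℝ → ℝ) (N : ℕ) [NeZero N] (η : Config N) : ℝ :=
  ∏ x : ZMod N, (if η x then ρ₀ ((x.val : ℝ) / N) else 1 - ρ₀ ((x.val : ℝ) / N))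

end FEP

namespace FEP

/-- The jump relation of the facilitated exclusion process: `η → η'` iff some allowed
nearest-neighbour exchange turns `η` into `η'`. -/
def jumpRel (N : ℕ) [NeZero N] (η η' : Config N) : Prop :=
  ∃ x : ZMod N, 1 ≤ rate η x ∧ η' = swapConf x (x + 1) η

/-- The set `Ω_N^k` of ergodic configurations with `k` particles. -/
def OmegaNk (N k : ℕ) [NeZero N] : Set (Config N) :=
  {η | η ∈ ergodicSet N ∧ numParticles η = k}

lemma rate_ge_one_iff {N : ℕ} (η : Config N) (x : ZMod N) :
    1 ≤ rate η x ↔ (η (x-1) = true ∧ η x = true ∧ η (x+1) = false) ∨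
      (η (x+2) = true ∧ η (x+1) = true ∧ η x = false) := by
  unfold rate ind
  cases h1 : η (x-1) <;> cases h2 : η x <;> cases h3 : η (x+1) <;> cases h4 : η (x+2) <;>
    norm_num

lemma numParticles_swapConf {N : ℕ} [NeZero N] (x y : ZMod N) (η : Config N) :
    numParticles (swapConf x y η) = numParticles η := by
  unfold numParticles swapConf
  exact Equiv.sum_comp (Equiv.swap x y) (fun z => if η z then 1 else 0)

lemma jump_mem_Omega {N k : ℕ} [NeZero N] {η η' : Config N}
    (hη : η ∈ OmegaNk N k) (hj : jumpRel N η η') : η' ∈ OmegaNk N k := by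
  obtain ⟨⟨herg, hnum⟩, hcard⟩ := hη
  obtain ⟨x, hr, rfl⟩ := hj
  have hnp : numParticles (swapConf x (x+1) η) = numParticles η := numParticles_swapConf _ _ _
  refine ⟨⟨?_, by rw [hnp]; exact hnum⟩, by rw [hnp, hcard]⟩
  rcases (rate_ge_one_iff η x).1 hr with ⟨ha, hb, hc⟩ | ⟨hd, hc, hb⟩
  · intro z
    by_cases hz1 : z = x + 1
    · left; subst hz1; simpa [swapConf, Equiv.swap_apply_right] using hb
    by_cases hz0 : z = x
    · right; subst hz0; simpa [swapConf, Equiv.swap_apply_right] using hb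
    · have he : (swapConf x (x+1) η) z = η z := by
        simp [swapConf, Equiv.swap_apply_of_ne_of_ne hz0 hz1]
      cases hez : η z with
      | true => left; rw [he, hez]
      | false =>
        right
        have hz1' : z + 1 ≠ x := by
          intro h
          have hzz : z = x - 1 := by rw [← h]; ring
          rw [hzz, ha] at hez; exact Bool.noConfusion hez
        have hz2' : z + 1 ≠ x + 1 := fun h => hz0 (add_right_cancel h)
        have hz : η (z+1) = true := by
          rcases herg z with h | h
          · rw [hez] at h; exact Bool.noConfusion h
          · exact h
        simpa [swapConf, Equiv.swap_apply_of_ne_of_ne hz1' hz2'] using hz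
  · intro z
    by_cases hz0 : z = x
    · left; subst hz0; simpa [swapConf, Equiv.swap_apply_left] using hc
    by_cases hz1 : z = x + 1
    · right; subst hz1
      have h2x : x + 2 ≠ x := by
        intro h
        rw [h] at hd; rw [hd] at hb; exact Bool.noConfusion hb
      have h2x1 : x + 2 ≠ x + 1 := by
        intro h
        have e1 : (1 : ZMod N) = 0 := by linear_combination h
        exact h2x (by linear_combination 2 * e1)
      have he : x + 1 + 1 = x + 2 := by ring
      rw [he]
      simpa [swapConf, Equiv.swap_apply_of_ne_of_ne h2x h2x1] using hd
    · have he : (swapConf x (x+1) η) z = η z := by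
        simp [swapConf, Equiv.swap_apply_of_ne_of_ne hz0 hz1]
      cases hez : η z with
      | true => left; rw [he, hez]
      | false =>
        right
        have hz : η (z+1) = true := by
          rcases herg z with h | h
          · rw [hez] at h; exact Bool.noConfusion h
          · exact h
        by_cases hzx : z + 1 = x
        · rw [hzx]; simpa [swapConf, Equiv.swap_apply_left] using hc
        · have hz2' : z + 1 ≠ x + 1 := fun h => hz0 (add_right_cancel h)
          simpa [swapConf, Equiv.swap_apply_of_ne_of_ne hzx hz2'] using hz

lemma jump_symm {N : ℕ} [NeZero N] {η ζ : Config N}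
    (herg : ∀ x : ZMod N, η x = true ∨ η (x+1) = true)
    (hj : jumpRel N η ζ) : jumpRel N ζ η := by
  obtain ⟨x, hr, rfl⟩ := hj
  refine ⟨x, ?_, ?_⟩
  · rw [rate_ge_one_iff]
    rcases (rate_ge_one_iff η x).1 hr with ⟨ha, hb, hc⟩ | ⟨hd, hc, hb⟩
    · right
      refine ⟨?_, ?_, ?_⟩
      · by_cases h2 : x + 2 = x
        · exfalso
          have h21 : x - 1 = x + 1 := by linear_combination -h2
          rw [h21, hc] at ha; exact Bool.noConfusion ha
        · have h21 : x + 2 ≠ x + 1 := by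
            intro h
            have e1 : (1 : ZMod N) = 0 := by linear_combination h
            exact h2 (by linear_combination 2 * e1)
          have hval : η (x+2) = true := by
            rcases herg (x+1) with h | h
            · rw [hc] at h; exact Bool.noConfusion h
            · rwa [show x + 1 + 1 = x + 2 by ring] at h
          simpa [swapConf, Equiv.swap_apply_of_ne_of_ne h2 h21] using hval
      · simpa [swapConf, Equiv.swap_apply_right] using hb
      · simpa [swapConf, Equiv.swap_apply_left] using hc
    · left
      refine ⟨?_, ?_, ?_⟩
      · by_cases h1 : x - 1 = x
        · exfalso
          have e1 : (1 : ZMod N) = 0 := by linear_combination -h1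
          have h2 : x + 2 = x := by linear_combination 2 * e1
          rw [h2] at hd; rw [hd] at hb; exact Bool.noConfusion hb
        · have h1' : x - 1 ≠ x + 1 := by
            intro h
            have e2 : x + 2 = x := by linear_combination -h
            rw [e2] at hd; rw [hd] at hb; exact Bool.noConfusion hb
          have hval : η (x - 1) = true := by
            rcases herg (x-1) with h | h
            · exact h
            · rw [show x - 1 + 1 = x by ring] at h; rw [h] at hb; exact Bool.noConfusion hb
          simpa [swapConf, Equiv.swap_apply_of_ne_of_ne h1 h1'] using hval
      · simpa [swapConf, Equiv.swap_apply_left] using hc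
      · simpa [swapConf, Equiv.swap_apply_right] using hb
  · funext z; simp [swapConf, Equiv.swap_apply_self]

lemma reach_mem {N k : ℕ} [NeZero N] {η ζ : Config N} (hη : η ∈ OmegaNk N k)
    (h : Relation.ReflTransGen (jumpRel N) η ζ) : ζ ∈ OmegaNk N k := by
  induction h with
  | refl => exact hη
  | tail _ hbc ih => exact jump_mem_Omega ih hbc

lemma reach_symm {N k : ℕ} [NeZero N] {η ζ : Config N} (hη : η ∈ OmegaNk N k)
    (h : Relation.ReflTransGen (jumpRel N) η ζ) : Relation.ReflTransGen (jumpRel N) ζ η := by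
  induction h with
  | refl => exact .refl
  | tail hab hbc ih =>
    have hb := reach_mem hη hab
    exact Relation.ReflTransGen.head (jump_symm hb.1.1 hbc) ih



lemma blocked_canonical (N m : ℕ) (V : Finset ℕ) (hVlt : ∀ v ∈ V, v < N)
    (hcard : V.card = m) (hm : 2 * m < N)
    (hadj : ∀ v ∈ V, (v + 1) % N ∉ V)
    (hblock : ∀ v ∈ V, 1 ≤ v → (v + N - 2) % N ∈ V) :
    V = (Finset.range m).image (fun i => 2 * i) := by
  have hN : 0 < N := by omega
  have step2 : ∀ v ∈ V, 2 ≤ v → v - 2 ∈ V := by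
    intro v hv h2
    have hvN := hVlt v hv
    have hb := hblock v hv (by omega)
    have he : (v + N - 2) % N = v - 2 := by
      have e : v + N - 2 = (v - 2) + N := by omega
      rw [e, Nat.add_mod_right, Nat.mod_eq_of_lt (by omega)]
    rwa [he] at hb
  have h1 : 1 ∉ V := by
    intro h1m
    have hN2 : 2 ≤ N := by have := hVlt 1 h1m; omega
    have hN1 : N - 1 ∈ V := by
      have hb := hblock 1 h1m le_rfl
      have he : (1 + N - 2) % N = N - 1 := by
        rw [show 1 + N - 2 = N - 1 by omega, Nat.mod_eq_of_lt (by omega)]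
      rwa [he] at hb
    have h0 : 0 ∉ V := by
      intro h0m
      have := hadj 0 h0m
      rw [show (0 + 1) % N = 1 from Nat.mod_eq_of_lt (by omega)] at this
      exact this h1m
    have chain : ∀ j, 2*j + 2 ≤ N → N - 1 - 2*j ∈ V := by
      intro j
      induction j with
      | zero => intro _; simpa using hN1
      | succ j ih =>
        intro hj
        have hw : N - 1 - 2*j ∈ V := ih (by omega)
        have h2w : 2 ≤ N - 1 - 2*j := by omega
        have hs := step2 _ hw h2w
        have he : N - 1 - 2*j - 2 = N - 1 - 2*(j+1) := by omega
        rwa [he] at hs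
    rcases Nat.even_or_odd N with hNe | hNo
    · obtain ⟨t, ht⟩ := hNe
      have hsub : (Finset.range t).image (fun j => N - 1 - 2*j) ⊆ V := by
        intro w hw
        simp only [Finset.mem_image, Finset.mem_range] at hw
        obtain ⟨j, hj, rfl⟩ := hw
        exact chain j (by omega)
      have hcard2 : ((Finset.range t).image (fun j => N - 1 - 2*j)).card = t := by
        rw [Finset.card_image_of_injOn, Finset.card_range]
        intro a ha b hb hab
        simp only [Finset.coe_range, Set.mem_Iio] at ha hb
        have hab' : N - 1 - 2*a = N - 1 - 2*b := hab
        omega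
      have hle := Finset.card_le_card hsub
      rw [hcard2, hcard] at hle
      omega
    · obtain ⟨t, ht⟩ := hNo
      have h2V : 2 ∈ V := by
        have hc := chain (t - 1) (by omega)
        have he : N - 1 - 2*(t-1) = 2 := by omega
        rwa [he] at hc
      have h0' := step2 2 h2V le_rfl
      norm_num at h0'
      exact h0 h0'
  have heven : ∀ v, v ∈ V → Even v := by
    intro v
    induction v using Nat.strong_induction_on with
    | _ v ih =>
      intro hv
      rcases Nat.lt_or_ge v 2 with hlt | hge
      · interval_cases v
        · exact Even.zero
        · exact absurd hv h1
      · obtain ⟨c, hc⟩ := ih (v-2) (by omega) (step2 v hv hge)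
        exact ⟨c+1, by omega⟩
  have hdown : ∀ v, v ∈ V → ∀ w, w ≤ v → Even w → w ∈ V := by
    intro v
    induction v using Nat.strong_induction_on with
    | _ v ih =>
      intro hv w hwv hw
      rcases eq_or_lt_of_le hwv with rfl | hlt
      · exact hv
      · obtain ⟨c, hc⟩ := heven v hv
        obtain ⟨d, hd⟩ := hw
        have h2 : 2 ≤ v := by omega
        exact ih (v-2) (by omega) (step2 v hv h2) w (by omega) ⟨d, hd⟩
  rcases Nat.eq_zero_or_pos m with rfl | hm1
  · rw [Finset.card_eq_zero] at hcard
    simp [hcard]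
  · have hne : V.Nonempty := Finset.card_pos.mp (by omega)
    set M := V.max' hne with hM
    have hMV : M ∈ V := V.max'_mem hne
    obtain ⟨c, hc⟩ := heven M hMV
    have hVeq : V = (Finset.range (M/2+1)).image (fun i => 2 * i) := by
      ext w
      simp only [Finset.mem_image, Finset.mem_range]
      constructor
      · intro hw
        have hwM : w ≤ M := Finset.le_max' V w hw
        obtain ⟨d, hd⟩ := heven w hw
        exact ⟨w/2, by omega, by omega⟩
      · rintro ⟨i, hi, rfl⟩
        exact hdown M hMV (2*i) (by omega) ⟨i, by omega⟩
    have hcM : M/2 + 1 = m := by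
      rw [hVeq, Finset.card_image_of_injective _ (fun a b h => by omega), Finset.card_range] at hcard
      exact hcard
    rw [hVeq, hcM]

/-- The set of hole positions (as natural numbers) of a configuration. -/
def holesV {N : ℕ} [NeZero N] (η : Config N) : Finset ℕ :=
  (Finset.univ.filter (fun x : ZMod N => η x = false)).image ZMod.val

lemma mem_holesV {N : ℕ} [NeZero N] {η : Config N} {v : ℕ} :
    v ∈ holesV η ↔ v < N ∧ η (v : ZMod N) = false := by
  unfold holesV
  simp only [Finset.mem_image, Finset.mem_filter, Finset.mem_univ, true_and]
  constructor
  · rintro ⟨x, hx, rfl⟩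
    refine ⟨ZMod.val_lt x, ?_⟩
    rwa [ZMod.natCast_rightInverse x]
  · rintro ⟨hv, hη⟩
    exact ⟨(v : ZMod N), hη, ZMod.val_cast_of_lt hv⟩

lemma card_holesV {N : ℕ} [NeZero N] (η : Config N) :
    (holesV η).card + numParticles η = N := by
  unfold holesV
  rw [Finset.card_image_of_injective _ (ZMod.val_injective N)]
  have h1 : numParticles η = (Finset.univ.filter (fun x : ZMod N => ¬ (η x = false))).card := by
    unfold numParticles
    rw [Finset.card_filter]
    apply Finset.sum_congr rfl
    intro x _
    by_cases h : η x <;> simp [h]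
  rw [h1, Finset.card_filter_add_card_filter_not, Finset.card_univ, ZMod.card]

/-- Potential function: sum of the values of the hole positions. -/
def Phi {N : ℕ} [NeZero N] (η : Config N) : ℕ :=
  ∑ z : ZMod N, if η z then 0 else z.val

lemma phi_swap_lt {N : ℕ} [NeZero N] (η : Config N) (x : ZMod N)
    (hx : η x = false) (hx1 : η (x-1) = true) (hv : 1 ≤ x.val) :
    Phi (swapConf (x-1) x η) < Phi η := by
  have hN2 : 2 ≤ N := by have := ZMod.val_lt x; omega
  haveI : Fact (1 < N) := ⟨hN2⟩
  have hne : x - 1 ≠ x := by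
    intro h
    exact one_ne_zero (sub_eq_self.mp h)
  have hvalc : ((x.val - 1 : ℕ) : ZMod N) = x - 1 := by
    rw [Nat.cast_sub hv, Nat.cast_one, ZMod.natCast_val, ZMod.cast_id]
  have hval : (x - 1).val = x.val - 1 := by
    rw [← hvalc, ZMod.val_cast_of_lt (by have := ZMod.val_lt x; omega)]
  have hPhi' : Phi (swapConf (x-1) x η)
      = ∑ z : ZMod N, (if η z then 0 else (Equiv.swap (x-1) x z).val) := by
    unfold Phi swapConf
    rw [← Equiv.sum_comp (Equiv.swap (x-1) x)
      (fun z => if η z then 0 else (Equiv.swap (x-1) x z).val)]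
    exact Finset.sum_congr rfl fun z _ => by rw [Equiv.swap_apply_self]
  rw [hPhi']
  unfold Phi
  rw [← Finset.add_sum_erase _ (fun z => if η z then 0 else (Equiv.swap (x-1) x z).val)
      (Finset.mem_univ x),
    ← Finset.add_sum_erase _ (fun z => if η z then 0 else z.val) (Finset.mem_univ x)]
  have hrest : ∑ z ∈ Finset.univ.erase x, (if η z then 0 else (Equiv.swap (x-1) x z).val)
      = ∑ z ∈ Finset.univ.erase x, (if η z then 0 else z.val) := by
    apply Finset.sum_congr rfl
    intro z hz
    have hzx : z ≠ x := Finset.ne_of_mem_erase hz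
    by_cases hz1 : z = x - 1
    · subst hz1; simp [hx1]
    · rw [Equiv.swap_apply_of_ne_of_ne hz1 hzx]
  rw [hrest]
  apply Nat.add_lt_add_right
  simp only [hx, Bool.false_eq_true, if_false, Equiv.swap_apply_right, hval]
  omega

/-- The canonical configuration: holes at `0, 2, …, 2(N-k)-2`. -/
def canonConf (N k : ℕ) [NeZero N] : Config N :=
  fun z => ! decide (z.val ∈ (Finset.range (N - k)).image (fun i => 2 * i))

lemma reach_canon {N k : ℕ} [NeZero N] (hk : N < 2 * k) (hkN : k ≤ N) :
    ∀ n (η : Config N), η ∈ OmegaNk N k → Phi η ≤ n →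
      Relation.ReflTransGen (jumpRel N) η (canonConf N k) := by
  intro n
  induction n using Nat.strong_induction_on with
  | _ n ih =>
    intro η hη hphi
    by_cases hmv : ∃ v ∈ holesV η, 1 ≤ v ∧ (v + N - 2) % N ∉ holesV η
    · obtain ⟨v, hvV, hv1, hnb⟩ := hmv
      obtain ⟨hvN, hηv⟩ := mem_holesV.mp hvV
      set x : ZMod N := (v : ZMod N) with hxdef
      have hxval : x.val = v := ZMod.val_cast_of_lt hvN
      have hN2 : 2 ≤ N := by omega
      have hcast : (((v + N - 2) % N : ℕ) : ZMod N) = x - 2 := by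
        rw [ZMod.natCast_mod]
        rw [show v + N - 2 = (v - 1) + (N - 1) by omega, Nat.cast_add,
          Nat.cast_sub hv1, Nat.cast_sub (by omega : 1 ≤ N), ZMod.natCast_self, Nat.cast_one]
        ring
      have hx2 : η (x - 2) = true := by
        by_contra h
        apply hnb
        rw [mem_holesV]
        refine ⟨Nat.mod_lt _ (by omega), ?_⟩
        rw [hcast]
        exact Bool.eq_false_iff.mpr (by simpa using h)
      have hx1 : η (x - 1) = true := by
        rcases hη.1.1 (x - 1) with h | h
        · exact h
        · rw [show x - 1 + 1 = x by ring] at h; rw [h] at hηv; exact Bool.noConfusion hηv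
      have hrate : 1 ≤ rate η (x - 1) := by
        rw [rate_ge_one_iff]
        left
        refine ⟨?_, hx1, ?_⟩
        · rw [show x - 1 - 1 = x - 2 by ring]; exact hx2
        · rw [show x - 1 + 1 = x by ring]; exact hηv
      have hj : jumpRel N η (swapConf (x-1) x η) := by
        refine ⟨x - 1, hrate, ?_⟩
        rw [show x - 1 + 1 = x by ring]
      have hη' := jump_mem_Omega hη hj
      have hlt : Phi (swapConf (x-1) x η) < Phi η :=
        phi_swap_lt η x hηv hx1 (by omega)
      exact Relation.ReflTransGen.head hj
        (ih (Phi (swapConf (x-1) x η)) (by omega) _ hη' le_rfl)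
    · push_neg at hmv
      have hcV : (holesV η).card = N - k := by
        have := card_holesV η
        have hnum : numParticles η = k := hη.2
        omega
      have hadj : ∀ v ∈ holesV η, (v + 1) % N ∉ holesV η := by
        intro v hv hmem
        obtain ⟨hvN, hηv⟩ := mem_holesV.mp hv
        obtain ⟨hvN1, hη1⟩ := mem_holesV.mp hmem
        have hN1 : 0 < N := Nat.pos_of_ne_zero (NeZero.ne N)
        have hc1 : (((v + 1) % N : ℕ) : ZMod N) = (v : ZMod N) + 1 := by
          rw [ZMod.natCast_mod]; push_cast; ring
        rw [hc1] at hη1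
        rcases hη.1.1 (v : ZMod N) with h | h
        · rw [h] at hηv; exact Bool.noConfusion hηv
        · rw [h] at hη1; exact Bool.noConfusion hη1
      have hVeq := blocked_canonical N (N - k) (holesV η)
        (fun v hv => (mem_holesV.mp hv).1) hcV (by omega) hadj hmv
      have hcanon : η = canonConf N k := by
        funext z
        have hzz : ((z.val : ℕ) : ZMod N) = z := ZMod.natCast_rightInverse z
        have hmemz : η z = false ↔ z.val ∈ holesV η := by
          rw [mem_holesV, hzz]
          exact ⟨fun h => ⟨ZMod.val_lt z, h⟩, fun h => h.2⟩
        unfold canonConf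
        by_cases hP : z.val ∈ (Finset.range (N-k)).image (fun i => 2 * i)
        · have : η z = false := hmemz.mpr (by rw [hVeq]; exact hP)
          rw [this]; simp [hP]
        · have h1 : η z ≠ false := fun h => hP (by rw [← hVeq]; exact hmemz.mp h)
          have h2 : η z = true := by
            cases hb : η z
            · exact absurd hb h1
            · rfl
          rw [h2]; simp [hP]
      rw [hcanon]

/-- **Irreducibility of the ergodic component.**  For `N/2 < k ≤ N`, the set `Ω_N^k` is closed
under the jump relation, and any two of its configurations are connected by a chain of jumps. -/
theorem ergodic_component_irreducible (N k : ℕ) [NeZero N] (hk : N < 2 * k) (hkN : k ≤ N) :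
    (∀ η η' : Config N, η ∈ OmegaNk N k → jumpRel N η η' → η' ∈ OmegaNk N k) ∧
      (∀ η η' : Config N, η ∈ OmegaNk N k → η' ∈ OmegaNk N k →
        Relation.ReflTransGen (jumpRel N) η η') := by
  constructor
  · exact fun η η' hη hj => jump_mem_Omega hη hj
  · intro η η' hη hη'
    have h1 := reach_canon hk hkN (Phi η) η hη le_rfl
    have h2 := reach_canon hk hkN (Phi η') η' hη' le_rfl
    exact h1.trans (reach_symm hη' h2)

end FEP
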